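/- Let (Z,ρ) be a compact metric space, let f,g: Z → Z be continuous maps, and let θ > 0. Assume: f is Lipschitz continuous with Lipschitz constant L > 1; (f,K_f,θ) and (g,K_g,θ) both satisfy condition (E) for nonempty compact sets K_f, K_g ⊆ Z with f(K_f) = K_f, f⁻¹(K_f) = K_f, g(K_g) = K_g, and g⁻¹(K_g) = K_g; the Hausdorff distance between K_f and K_g is less than θ/4; and sup_{z ∈ Z} ρ(f(z), g(z)) ≤ θ/3. Then there exists a unique continuous map h: K_f → K_g such that g∘h = h∘f on K_f and ρ(h(z), z) ≤ θ/2 for all z ∈ K_f. Moreover, this h is a homeomorphism of K_f onto K_g, and h is Hölder continuous with exponent log 2 / log L and a Hölder constant depending only on θ, L and the diameter of Z (in particular, independent of g). -/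

import Mathlib

/-- Condition (E): for every `x` in the closed `θ`-neighborhood of `K` and every `y`
with `ρ(x,y) ≤ θ`, one has `ρ(g(x),g(y)) ≥ 2ρ(x,y)`; moreover `g` is injective on
`B(x,θ)` and `g(B(x,θ)) ⊇ B(g(x),2θ)`. -/
def CondE {Z : Type*} [MetricSpace Z] (g : Z → Z) (K : Set Z) (θ : ℝ) : Prop :=
  ∀ x : Z, Metric.infDist x K ≤ θ →
    (∀ y : Z, dist x y ≤ θ → 2 * dist x y ≤ dist (g x) (g y)) ∧
    Set.InjOn g (Metric.ball x θ) ∧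
    Metric.ball (g x) (2 * θ) ⊆ g '' Metric.ball x θ

open Metric Filter

lemma le_zero_of_le_half_pow {a c : ℝ} (h : ∀ n : ℕ, a ≤ c * (1/2)^n) : a ≤ 0 := by
  have ht : Filter.Tendsto (fun n : ℕ => c * (1/2:ℝ)^n) atTop (nhds 0) := by
    simpa using (tendsto_pow_atTop_nhds_zero_of_lt_one (by norm_num : (0:ℝ) ≤ 1/2)
      (by norm_num)).const_mul c
  exact ge_of_tendsto ht (Filter.Eventually.of_forall h)

lemma exists_branch {Z : Type*} [MetricSpace Z] {g : Z → Z} {K : Set Z} {θ : ℝ}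
    (hE : CondE g K θ) {x y : Z} (hx : Metric.infDist x K ≤ θ) (hy : dist (g x) y < 2 * θ) :
    ∃ x', g x' = y ∧ dist x x' ≤ dist (g x) y / 2 := by
  obtain ⟨hexp, -, hsurj⟩ := hE x hx
  obtain ⟨x', hx', hgx'⟩ := hsurj (by rwa [Metric.mem_ball, dist_comm])
  have h1 : dist x x' ≤ θ := by rw [dist_comm]; exact (Metric.mem_ball.mp hx').le
  have h2 := hexp x' h1
  rw [hgx'] at h2
  exact ⟨x', hgx', by linarith⟩

lemma expand_iter {Z : Type*} [MetricSpace Z] {g : Z → Z} {K : Set Z} {θ : ℝ}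
    (hE : CondE g K θ) {w w' : Z} :
    ∀ n : ℕ, (∀ k < n, Metric.infDist (g^[k] w) K ≤ θ ∧ dist (g^[k] w) (g^[k] w') ≤ θ) →
      2 ^ n * dist w w' ≤ dist (g^[n] w) (g^[n] w')
  | 0, _ => by simp
  | n+1, h => by
    have ih := expand_iter hE n (fun k hk => h k (hk.trans (Nat.lt_succ_self n)))
    have hn := h n (Nat.lt_succ_self n)
    have hstep := (hE (g^[n] w) hn.1).1 (g^[n] w') hn.2
    rw [Function.iterate_succ_apply', Function.iterate_succ_apply']
    calc (2:ℝ)^(n+1) * dist w w' = 2 * (2^n * dist w w') := by ring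
    _ ≤ 2 * dist (g^[n] w) (g^[n] w') := by linarith
    _ ≤ _ := hstep

lemma shadow_unique {Z : Type*} [MetricSpace Z] {g : Z → Z} {K : Set Z} {θ : ℝ}
    (hθ : 0 < θ) (hE : CondE g K θ)
    {u : ℕ → Z} (hu : ∀ k, Metric.infDist (u k) K ≤ θ/4)
    {w w' : Z} (hw : ∀ k, dist (g^[k] w) (u k) ≤ θ/2)
    (hw' : ∀ k, dist (g^[k] w') (u k) ≤ θ/2) : w = w' := by
  have key : ∀ n : ℕ, dist w w' ≤ θ * (1/2)^n := by
    intro n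
    have h1 : ∀ k, Metric.infDist (g^[k] w) K ≤ θ ∧ dist (g^[k] w) (g^[k] w') ≤ θ := by
      intro k
      constructor
      · calc Metric.infDist (g^[k] w) K
            ≤ Metric.infDist (u k) K + dist (g^[k] w) (u k) :=
              Metric.infDist_le_infDist_add_dist
        _ ≤ θ/4 + θ/2 := add_le_add (hu k) (hw k)
        _ ≤ θ := by linarith
      · calc dist (g^[k] w) (g^[k] w') ≤ dist (g^[k] w) (u k) + dist (g^[k] w') (u k) :=
            dist_triangle_right _ _ _
        _ ≤ θ := by linarith [hw k, hw' k]
    have h2 := expand_iter hE n (fun k _ => h1 k)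
    have h3 := (h1 n).2
    have h2n : (0:ℝ) < 2^n := by positivity
    rw [show θ * (1/2:ℝ)^n = θ / 2^n by rw [one_div, inv_pow]; ring, le_div_iff₀ h2n]
    nlinarith
  have := le_zero_of_le_half_pow (c := θ) key
  exact eq_of_dist_eq_zero (le_antisymm this dist_nonneg)

lemma shadow_exists {Z : Type*} [MetricSpace Z] [CompactSpace Z] {g : Z → Z}
    (hg : Continuous g) {K : Set Z} {θ : ℝ}
    (hθ : 0 < θ) (hKne : K.Nonempty) (hK : IsCompact K) (hE : CondE g K θ)
    (hpre : g ⁻¹' K = K) {u : ℕ → Z} (hu : ∀ k, Metric.infDist (u k) K ≤ θ/4)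
    (hps : ∀ k, dist (g (u k)) (u (k+1)) ≤ θ/3) :
    ∃ w ∈ K, ∀ k, dist (g^[k] w) (u k) ≤ θ/3 := by
  have h34 : θ/4 ≤ θ := by linarith
  have hbr : ∀ (k : ℕ) (y : Z), ∃ x', dist (g (u k)) y ≤ θ →
      g x' = y ∧ dist (u k) x' ≤ dist (g (u k)) y / 2 := by
    intro k y
    by_cases hy : dist (g (u k)) y ≤ θ
    · obtain ⟨x', h1, h2⟩ := exists_branch hE ((hu k).trans h34)
        (lt_of_le_of_lt hy (by linarith))
      exact ⟨x', fun _ => ⟨h1, h2⟩⟩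
    · exact ⟨u k, fun h => absurd h hy⟩
  choose pb hpb using hbr
  obtain ⟨down, hdown0, hdownS⟩ : ∃ down : ℕ → ℕ → Z, (∀ n, down n 0 = u n) ∧
      ∀ n j, down n (j+1) = pb (n - (j+1)) (down n j) :=
    ⟨fun n j => Nat.rec (u n) (fun j ih => pb (n - (j+1)) ih) j, fun _ => rfl, fun _ _ => rfl⟩
  have hcond : ∀ n j, j + 1 ≤ n → dist (u (n - j)) (down n j) ≤ θ/3 →
      dist (g (u (n - (j+1)))) (down n j) ≤ 2*θ/3 := by
    intro n j hj hprev
    have harith : n - (j+1) + 1 = n - j := by omega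
    calc dist (g (u (n - (j+1)))) (down n j)
        ≤ dist (g (u (n - (j+1)))) (u (n - j)) + dist (u (n-j)) (down n j) :=
          dist_triangle _ _ _
    _ ≤ θ/3 + θ/3 := add_le_add (by rw [← harith]; exact hps _) hprev
    _ = 2*θ/3 := by ring
  have inv : ∀ j n, j ≤ n → dist (u (n - j)) (down n j) ≤ θ/3 := by
    intro j
    induction j with
    | zero => intro n _; rw [Nat.sub_zero, hdown0, dist_self]; positivity
    | succ j ih =>
      intro n hj
      have hc := hcond n j hj (ih n (by omega))
      rw [hdownS]
      exact le_trans (hpb _ _ (by linarith)).2 (by linarith)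
  have gstep : ∀ n j, j + 1 ≤ n → g (down n (j+1)) = down n j := by
    intro n j hj
    have hc := hcond n j hj (inv j n (by omega))
    rw [hdownS]
    exact (hpb _ _ (by linarith)).1
  have hiter : ∀ n k, k ≤ n → g^[k] (down n n) = down n (n - k) := by
    intro n k
    induction k with
    | zero => intro _; simp
    | succ k ih =>
      intro hk
      have hk' : k ≤ n := by omega
      rw [Function.iterate_succ_apply', ih hk', show n - k = (n - (k+1)) + 1 by omega]
      exact gstep n (n - (k+1)) (by omega)
  have adj : ∀ j n, j ≤ n → dist (down n j) (down (n+1) (j+1)) ≤ θ/3 * (1/2)^j := by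
    intro j
    induction j with
    | zero =>
      intro n _
      rw [hdown0, hdownS, hdown0, show n + 1 - (0+1) = n by omega]
      have := (hpb n (u (n+1)) ((hps n).trans (by linarith))).2
      have h6 : dist (g (u n)) (u (n+1)) / 2 ≤ θ/6 := by linarith [hps n]
      simpa using this.trans (by linarith)
    | succ j ih =>
      intro n hj
      have ha := inv (j+1) n hj
      have hb := inv (j+2) (n+1) (by omega)
      rw [show n + 1 - (j+2) = n - (j+1) by omega] at hb
      have hinf : Metric.infDist (down n (j+1)) K ≤ θ := by
        calc Metric.infDist (down n (j+1)) K
            ≤ Metric.infDist (u (n-(j+1))) K + dist (down n (j+1)) (u (n-(j+1))) :=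
              Metric.infDist_le_infDist_add_dist
        _ ≤ θ/4 + θ/3 := add_le_add (hu _) (by rw [dist_comm]; exact ha)
        _ ≤ θ := by linarith
      have hd : dist (down n (j+1)) (down (n+1) (j+2)) ≤ θ := by
        calc dist (down n (j+1)) (down (n+1) (j+2))
            ≤ dist (down n (j+1)) (u (n-(j+1))) + dist (u (n-(j+1))) (down (n+1) (j+2)) :=
              dist_triangle _ _ _
        _ ≤ θ/3 + θ/3 := add_le_add (by rw [dist_comm]; exact ha) hb
        _ ≤ θ := by linarith
      have hexp := (hE _ hinf).1 _ hd
      rw [gstep n j hj, gstep (n+1) (j+1) (by omega)] at hexp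
      have hih := ih n (by omega)
      calc dist (down n (j+1)) (down (n+1) (j+2)) ≤ (θ/3 * (1/2)^j) / 2 := by linarith
      _ = θ/3 * (1/2)^(j+1) := by rw [pow_succ]; ring
  have hcau : CauchySeq (fun n => down n n) :=
    cauchySeq_of_le_geometric (1/2) (θ/3) (by norm_num) (fun n => adj n n le_rfl)
  obtain ⟨w, hw⟩ := cauchySeq_tendsto_of_complete hcau
  have hshad : ∀ k, dist (g^[k] w) (u k) ≤ θ/3 := by
    intro k
    have hten : Filter.Tendsto (fun n => dist (g^[k] (down n n)) (u k)) atTop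
        (nhds (dist (g^[k] w) (u k))) :=
      (((hg.iterate k).tendsto w).comp hw).dist tendsto_const_nhds
    refine le_of_tendsto hten (Filter.eventually_atTop.mpr ⟨k, fun n hn => ?_⟩)
    rw [hiter n k hn, dist_comm]
    have h5 := inv (n-k) n (by omega)
    rwa [show n - (n - k) = k by omega] at h5
  have hmem : ∀ n : ℕ, ∃ q ∈ K, dist w q ≤ (7*θ/12) * (1/2)^n := by
    intro n
    have hclaim : ∀ j, j ≤ n → ∃ q ∈ K, dist (g^[n - j] w) q ≤ (7*θ/12) * (1/2)^j := by
      intro j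
      induction j with
      | zero =>
        intro _
        obtain ⟨p, hp, hdp⟩ := hK.exists_infDist_eq_dist hKne (u n)
        refine ⟨p, hp, ?_⟩
        rw [Nat.sub_zero, pow_zero, mul_one]
        calc dist (g^[n] w) p ≤ dist (g^[n] w) (u n) + dist (u n) p := dist_triangle _ _ _
        _ ≤ θ/3 + θ/4 := add_le_add (hshad n) (by rw [← hdp]; exact hu n)
        _ = 7*θ/12 := by ring
      | succ j ih =>
        intro hj
        obtain ⟨q, hqK, hq⟩ := ih (by omega)
        have hx : Metric.infDist (g^[n-(j+1)] w) K ≤ θ := by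
          calc Metric.infDist (g^[n-(j+1)] w) K
              ≤ Metric.infDist (u (n-(j+1))) K + dist (g^[n-(j+1)] w) (u (n-(j+1))) :=
                Metric.infDist_le_infDist_add_dist
          _ ≤ θ/4 + θ/3 := add_le_add (hu _) (hshad _)
          _ ≤ θ := by linarith
        have hgx : g (g^[n-(j+1)] w) = g^[n-j] w := by
          conv_rhs => rw [show n - j = (n-(j+1)) + 1 by omega, Function.iterate_succ_apply']
        have hpow : (1/2:ℝ)^j ≤ 1 := pow_le_one₀ (by norm_num) (by norm_num)
        have hdistq : dist (g (g^[n-(j+1)] w)) q < 2*θ := by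
          rw [hgx]
          calc dist (g^[n-j] w) q ≤ (7*θ/12) * (1/2)^j := hq
          _ ≤ 7*θ/12 := by nlinarith
          _ < 2*θ := by linarith
        obtain ⟨q', hq'1, hq'2⟩ := exists_branch hE hx hdistq
        refine ⟨q', ?_, ?_⟩
        · have : q' ∈ g ⁻¹' K := by rw [Set.mem_preimage, hq'1]; exact hqK
          rwa [hpre] at this
        · calc dist (g^[n-(j+1)] w) q' ≤ dist (g (g^[n-(j+1)] w)) q / 2 := hq'2
          _ ≤ ((7*θ/12) * (1/2)^j)/2 := by rw [hgx]; linarith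
          _ = (7*θ/12) * (1/2)^(j+1) := by rw [pow_succ]; ring
    obtain ⟨q, hqK, hq⟩ := hclaim n le_rfl
    rw [Nat.sub_self] at hq
    exact ⟨q, hqK, by simpa using hq⟩
  have hwK : w ∈ K := by
    rw [hK.isClosed.mem_iff_infDist_zero hKne]
    refine le_antisymm ?_ Metric.infDist_nonneg
    refine le_zero_of_le_half_pow (c := 7*θ/12) (fun n => ?_)
    obtain ⟨q, hqK, hq⟩ := hmem n
    exact le_trans (Metric.infDist_le_dist_of_mem hqK) hq
  exact ⟨w, hwK, hshad⟩

set_option maxHeartbeats 1000000 in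
/-- Theorem 4.8 (structural stability). The Hölder constant `C` is quantified before
`f`, `g`, `K_f`, `K_g`, so it depends only on `Z` (hence on `diam Z`), `θ` and `L`. -/
theorem stmt7 {Z : Type*} [MetricSpace Z] [CompactSpace Z]
    (θ L : ℝ) (hθ : 0 < θ) (hL : 1 < L) :
    ∃ C : ℝ, 0 < C ∧
      ∀ f g : Z → Z, Continuous f → Continuous g →
        (∀ x y : Z, dist (f x) (f y) ≤ L * dist x y) →
        ∀ Kf Kg : Set Z,
          Kf.Nonempty → IsCompact Kf → Kg.Nonempty → IsCompact Kg →
          CondE f Kf θ → CondE g Kg θ →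
          f '' Kf = Kf → f ⁻¹' Kf = Kf → g '' Kg = Kg → g ⁻¹' Kg = Kg →
          Metric.hausdorffDist Kf Kg < θ / 4 →
          (∀ z : Z, dist (f z) (g z) ≤ θ / 3) →
          ∃ h : Z → Z,
            (ContinuousOn h Kf ∧ Set.MapsTo h Kf Kg ∧
              (∀ z ∈ Kf, g (h z) = h (f z)) ∧
              (∀ z ∈ Kf, dist (h z) z ≤ θ / 2)) ∧
            (∀ h' : Z → Z, ContinuousOn h' Kf → Set.MapsTo h' Kf Kg →
              (∀ z ∈ Kf, g (h' z) = h' (f z)) →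
              (∀ z ∈ Kf, dist (h' z) z ≤ θ / 2) →
              Set.EqOn h' h Kf) ∧
            Set.InjOn h Kf ∧ h '' Kf = Kg ∧
            (∀ x ∈ Kf, ∀ y ∈ Kf,
              dist (h x) (h y) ≤ C * dist x y ^ (Real.log 2 / Real.log L)) := by
  set α := Real.log 2 / Real.log L with hαdef
  have hlogL : 0 < Real.log L := Real.log_pos hL
  have hα : 0 < α := div_pos (Real.log_pos one_lt_two) hlogL
  set D := Metric.diam (Set.univ : Set Z) with hDdef
  have hD0 : 0 ≤ D := Metric.diam_nonneg
  have hθ3 : (0:ℝ) < θ/3 := by linarith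
  set C1 := 2*θ*(3/θ)^α with hC1def
  set C2 := (2*θ/3 + D)/((θ/3)^α) with hC2def
  have hC1pos : 0 < C1 := by
    have : (0:ℝ) < (3/θ)^α := Real.rpow_pos_of_pos (by positivity) α
    rw [hC1def]; positivity
  have hrppos : 0 < (θ/3:ℝ)^α := Real.rpow_pos_of_pos hθ3 α
  have hC2nonneg : 0 ≤ C2 := div_nonneg (by linarith) hrppos.le
  refine ⟨C1 + C2 + 1, by linarith, ?_⟩
  intro f g hf hg hLip Kf Kg hKfne hKf hKgne hKg hEf hEg hfKf hfpre hgKg hgpre hHaus hfg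
  have hEdist : EMetric.hausdorffEdist Kf Kg ≠ ⊤ :=
    Metric.hausdorffEdist_ne_top_of_nonempty_of_bounded hKfne hKgne hKf.isBounded hKg.isBounded
  have hfiter : ∀ z ∈ Kf, ∀ k : ℕ, f^[k] z ∈ Kf := by
    intro z hz k
    induction k with
    | zero => simpa using hz
    | succ k ih =>
      rw [Function.iterate_succ_apply']
      rw [← hfKf]
      exact Set.mem_image_of_mem f ih
  have hgiter : ∀ w ∈ Kg, ∀ k : ℕ, g^[k] w ∈ Kg := by
    intro w hw k
    induction k with
    | zero => simpa using hw
    | succ k ih =>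
      rw [Function.iterate_succ_apply']
      rw [← hgKg]
      exact Set.mem_image_of_mem g ih
  have hinfKg : ∀ z ∈ Kf, Metric.infDist z Kg ≤ θ/4 := fun z hz =>
    (Metric.infDist_le_hausdorffDist_of_mem hz hEdist).trans hHaus.le
  have hinfKf : ∀ w ∈ Kg, Metric.infDist w Kf ≤ θ/4 := by
    intro w hw
    have h1 := Metric.infDist_le_hausdorffDist_of_mem hw
      (Metric.hausdorffEdist_ne_top_of_nonempty_of_bounded hKgne hKfne hKg.isBounded hKf.isBounded)
    rw [Metric.hausdorffDist_comm] at h1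
    exact h1.trans hHaus.le
  have hsh_ex : ∀ z : Z, ∃ w : Z, z ∈ Kf →
      w ∈ Kg ∧ ∀ k, dist (g^[k] w) (f^[k] z) ≤ θ/3 := by
    intro z
    by_cases hz : z ∈ Kf
    · obtain ⟨w, hw1, hw2⟩ := shadow_exists hg hθ hKgne hKg hEg hgpre
        (u := fun k => f^[k] z) (fun k => hinfKg _ (hfiter z hz k))
        (fun k => by
          show dist (g (f^[k] z)) (f^[k+1] z) ≤ θ/3
          rw [Function.iterate_succ_apply', dist_comm]; exact hfg _)
      exact ⟨w, fun _ => ⟨hw1, hw2⟩⟩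
    · exact ⟨z, fun h => absurd h hz⟩
  choose h hh using hsh_ex
  have hmapsTo : Set.MapsTo h Kf Kg := fun z hz => (hh z hz).1
  have hdist13 : ∀ z ∈ Kf, dist (h z) z ≤ θ/3 := by
    intro z hz
    have := (hh z hz).2 0
    simpa using this
  have hdist12 : ∀ z ∈ Kf, dist (h z) z ≤ θ/2 := fun z hz =>
    (hdist13 z hz).trans (by linarith)
  have huniq : ∀ z ∈ Kf, ∀ w w' : Z, (∀ k, dist (g^[k] w) (f^[k] z) ≤ θ/2) →
      (∀ k, dist (g^[k] w') (f^[k] z) ≤ θ/2) → w = w' :=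
    fun z hz w w' hw hw' =>
      shadow_unique hθ hEg (u := fun k => f^[k] z)
        (fun k => hinfKg _ (hfiter z hz k)) hw hw'
  have hconj : ∀ z ∈ Kf, g (h z) = h (f z) := by
    intro z hz
    have hfz : f z ∈ Kf := by simpa using hfiter z hz 1
    refine huniq (f z) hfz _ _ ?_ ?_
    · intro k
      have := (hh z hz).2 (k+1)
      rw [Function.iterate_succ_apply, Function.iterate_succ_apply] at this
      exact this.trans (by linarith)
    · intro k; exact ((hh (f z) hfz).2 k).trans (by linarith)
  have hLip_iter : ∀ (k : ℕ) (x y : Z), dist (f^[k] x) (f^[k] y) ≤ L^k * dist x y := by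
    intro k
    induction k with
    | zero => intro x y; simp
    | succ k ih =>
      intro x y
      rw [Function.iterate_succ_apply', Function.iterate_succ_apply', pow_succ]
      calc dist (f (f^[k] x)) (f (f^[k] y)) ≤ L * dist (f^[k] x) (f^[k] y) := hLip _ _
      _ ≤ L * (L^k * dist x y) :=
          mul_le_mul_of_nonneg_left (ih x y) (by linarith)
      _ = L^k * L * dist x y := by ring
  have hkey : ∀ x ∈ Kf, ∀ y ∈ Kf, ∀ n : ℕ, L^n * dist x y ≤ θ/3 →
      2^n * dist (h x) (h y) ≤ θ := by
    intro x hx y hy n hn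
    have hcond : ∀ k ≤ n,
        Metric.infDist (g^[k] (h x)) Kg ≤ θ ∧ dist (g^[k] (h x)) (g^[k] (h y)) ≤ θ := by
      intro k hk
      have h1 := (hh x hx).2 k
      have h2 := (hh y hy).2 k
      have hLk : L^k * dist x y ≤ θ/3 := by
        refine le_trans ?_ hn
        exact mul_le_mul_of_nonneg_right (pow_le_pow_right₀ (by linarith) hk) dist_nonneg
      constructor
      · calc Metric.infDist (g^[k] (h x)) Kg
            ≤ Metric.infDist (f^[k] x) Kg + dist (g^[k] (h x)) (f^[k] x) :=
              Metric.infDist_le_infDist_add_dist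
        _ ≤ θ/4 + θ/3 := add_le_add (hinfKg _ (hfiter x hx k)) h1
        _ ≤ θ := by linarith
      · calc dist (g^[k] (h x)) (g^[k] (h y))
            ≤ dist (g^[k] (h x)) (f^[k] x) + dist (f^[k] x) (f^[k] y)
              + dist (f^[k] y) (g^[k] (h y)) := dist_triangle4 _ _ _ _
        _ ≤ θ/3 + θ/3 + θ/3 := by
            refine add_le_add (add_le_add h1 ((hLip_iter k x y).trans hLk)) ?_
            rw [dist_comm]; exact h2
        _ ≤ θ := by linarith
    have hexp := expand_iter hEg n (fun k hk => hcond k (by omega))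
    exact hexp.trans (hcond n le_rfl).2
  have hHolder : ∀ x ∈ Kf, ∀ y ∈ Kf, dist (h x) (h y) ≤ (C1 + C2 + 1) * dist x y ^ α := by
    intro x hx y hy
    have hd0 : 0 ≤ dist x y := dist_nonneg
    have hdαnn : 0 ≤ dist x y ^ α := Real.rpow_nonneg hd0 α
    rcases eq_or_lt_of_le hd0 with heq | hdpos
    · have hxy : x = y := eq_of_dist_eq_zero heq.symm
      subst hxy
      simpa using mul_nonneg (by linarith : (0:ℝ) ≤ C1 + C2 + 1) hdαnn
    · by_cases hsmall : dist x y ≤ θ/3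
      · set d := dist x y with hddef
        set t := θ/(3*d) with htdef
        have ht1 : 1 ≤ t := by rw [htdef, le_div_iff₀ (by linarith)]; linarith
        have htpos : 0 < t := lt_of_lt_of_le one_pos ht1
        set n := (⌊Real.logb L t⌋).toNat with hndef
        have hfl0 : (0:ℤ) ≤ ⌊Real.logb L t⌋ :=
          Int.le_floor.mpr (by simpa using Real.logb_nonneg hL ht1)
        have hcast : (n : ℝ) = (⌊Real.logb L t⌋ : ℝ) := by
          rw [hndef]; exact_mod_cast congrArg (Int.cast : ℤ → ℝ) (Int.toNat_of_nonneg hfl0)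
        have hnle : (n:ℝ) ≤ Real.logb L t := by rw [hcast]; exact Int.floor_le _
        have hltn : Real.logb L t < (n:ℝ) + 1 := by rw [hcast]; exact Int.lt_floor_add_one _
        have hLn : (L:ℝ)^n ≤ t := by
          have h1 := Real.rpow_le_rpow_of_exponent_le hL.le hnle
          rwa [Real.rpow_natCast, Real.rpow_logb (by linarith) hL.ne' htpos] at h1
        have hkey' := hkey x hx y hy n (by
          calc L^n * d ≤ t * d := mul_le_mul_of_nonneg_right hLn hd0
          _ = θ/3 := by rw [htdef]; field_simp)
        have h2n : (0:ℝ) < 2^n := by positivity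
        have hdh : dist (h x) (h y) ≤ θ / 2^n := by
          rw [le_div_iff₀ h2n]; nlinarith
        have htα : t^α = (2:ℝ)^(Real.logb L t) := by
          rw [Real.rpow_def_of_pos htpos, Real.rpow_def_of_pos (by norm_num : (0:ℝ) < 2),
            Real.logb, hαdef]
          congr 1
          ring
        have h2pow : (2:ℝ)^(Real.logb L t) < 2^((n:ℝ)+1) :=
          Real.rpow_lt_rpow_of_exponent_lt one_lt_two hltn
        have h2pow' : (2:ℝ)^((n:ℝ)+1) = 2 * 2^n := by
          rw [Real.rpow_add (by norm_num), Real.rpow_one, Real.rpow_natCast]; ring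
        have htα2 : t^α < 2 * 2^n := by rw [htα, ← h2pow']; exact h2pow
        have htα0 : 0 < t^α := Real.rpow_pos_of_pos htpos α
        have htd : t * d = θ/3 := by rw [htdef]; field_simp
        have hdα : t^α * d^α = (θ/3)^α := by rw [← Real.mul_rpow htpos.le hd0, htd]
        have hdα' : d^α = (θ/3)^α / t^α := by
          rw [eq_div_iff (ne_of_gt htα0), mul_comm]; exact hdα
        have hone : (3/θ:ℝ)^α * (θ/3)^α = 1 := by
          rw [← Real.mul_rpow (by positivity) (by positivity),
            show (3/θ) * (θ/3) = (1:ℝ) by field_simp, Real.one_rpow]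
        have hgoal1 : dist (h x) (h y) ≤ C1 * d^α := by
          calc dist (h x) (h y) ≤ θ / 2^n := hdh
          _ ≤ 2*θ / t^α := by
              rw [div_le_div_iff₀ h2n htα0]
              nlinarith
          _ = C1 * d^α := by
              rw [hC1def, hdα']
              calc (2*θ:ℝ) / t^α = (2*θ) * ((3/θ)^α * (θ/3)^α) / t^α := by rw [hone, mul_one]
              _ = 2*θ*(3/θ)^α * ((θ/3)^α / t^α) := by ring
        calc dist (h x) (h y) ≤ C1 * d^α := hgoal1
        _ ≤ (C1+C2+1) * d^α := mul_le_mul_of_nonneg_right (by linarith) hdαnn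
      · have hdD : dist x y ≤ D :=
          Metric.dist_le_diam_of_mem isCompact_univ.isBounded (Set.mem_univ x) (Set.mem_univ y)
        have hθ3d : (θ/3:ℝ) < dist x y := lt_of_not_ge hsmall
        have hrp : (θ/3:ℝ)^α ≤ dist x y ^ α := Real.rpow_le_rpow hθ3.le hθ3d.le hα.le
        have hbound : dist (h x) (h y) ≤ 2*θ/3 + D := by
          have h1 := hdist13 x hx
          have h2 := hdist13 y hy
          calc dist (h x) (h y) ≤ dist (h x) x + dist x y + dist y (h y) :=
              dist_triangle4 _ _ _ _
          _ ≤ θ/3 + D + θ/3 := by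
              refine add_le_add (add_le_add h1 hdD) ?_
              rw [dist_comm]; exact h2
          _ = 2*θ/3 + D := by ring
        have hC2d : 2*θ/3 + D ≤ C2 * dist x y ^ α := by
          rw [hC2def, div_mul_eq_mul_div, le_div_iff₀ hrppos]
          exact mul_le_mul_of_nonneg_left hrp (by linarith)
        calc dist (h x) (h y) ≤ 2*θ/3 + D := hbound
        _ ≤ C2 * dist x y ^ α := hC2d
        _ ≤ (C1+C2+1) * dist x y ^ α := mul_le_mul_of_nonneg_right (by linarith) hdαnn
  have hcont : ContinuousOn h Kf := by
    rw [Metric.continuousOn_iff]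
    intro x hx ε hε
    have hcont0 : ContinuousAt (fun s : ℝ => (C1+C2+1) * s^α) 0 :=
      continuousAt_const.mul (Real.continuousAt_rpow_const 0 α (Or.inr hα.le))
    obtain ⟨δ, hδ, hδ2⟩ := Metric.continuousAt_iff.mp hcont0 ε hε
    refine ⟨δ, hδ, fun y hy hxy => ?_⟩
    have hb := hHolder y hy x hx
    have h1 : dist (dist y x) 0 < δ := by
      rw [Real.dist_eq, sub_zero, abs_of_nonneg dist_nonneg]; exact hxy
    have h2 := hδ2 h1
    rw [Real.dist_eq, Real.zero_rpow (ne_of_gt hα), mul_zero, sub_zero] at h2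
    exact lt_of_le_of_lt hb (lt_of_le_of_lt (le_abs_self _) h2)
  have huniq_clause : ∀ h' : Z → Z, ContinuousOn h' Kf → Set.MapsTo h' Kf Kg →
      (∀ z ∈ Kf, g (h' z) = h' (f z)) → (∀ z ∈ Kf, dist (h' z) z ≤ θ/2) →
      Set.EqOn h' h Kf := by
    intro h' _ _ hconj' hdist' z hz
    have hiterconj : ∀ k : ℕ, g^[k] (h' z) = h' (f^[k] z) := by
      intro k
      induction k with
      | zero => simp
      | succ k ih =>
        rw [Function.iterate_succ_apply', ih, Function.iterate_succ_apply']
        exact hconj' _ (hfiter z hz k)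
    refine huniq z hz _ _ ?_ ?_
    · intro k; rw [hiterconj k]; exact hdist' _ (hfiter z hz k)
    · intro k; exact ((hh z hz).2 k).trans (by linarith)
  have hinj : Set.InjOn h Kf := by
    intro x hx y hy hxy
    have hdall : ∀ k : ℕ, dist (f^[k] x) (f^[k] y) ≤ 2*θ/3 := by
      intro k
      have h1 := (hh x hx).2 k
      have h2 := (hh y hy).2 k
      calc dist (f^[k] x) (f^[k] y)
          ≤ dist (f^[k] x) (g^[k] (h x)) + dist (g^[k] (h x)) (f^[k] y) := dist_triangle _ _ _
      _ = dist (f^[k] x) (g^[k] (h x)) + dist (g^[k] (h y)) (f^[k] y) := by rw [hxy]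
      _ ≤ θ/3 + θ/3 := add_le_add (by rw [dist_comm]; exact h1) h2
      _ = 2*θ/3 := by ring
    have key : ∀ n : ℕ, dist x y ≤ (2*θ/3) * (1/2)^n := by
      intro n
      have hc : ∀ k < n, Metric.infDist (f^[k] x) Kf ≤ θ ∧ dist (f^[k] x) (f^[k] y) ≤ θ :=
        fun k _ => ⟨(Metric.infDist_zero_of_mem (hfiter x hx k)).le.trans hθ.le,
          (hdall k).trans (by linarith)⟩
      have hexp := expand_iter hEf n hc
      have h2n : (0:ℝ) < 2^n := by positivity
      rw [show (2*θ/3) * (1/2:ℝ)^n = (2*θ/3) / 2^n by rw [one_div, inv_pow]; ring,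
        le_div_iff₀ h2n]
      nlinarith [hdall n]
    have := le_zero_of_le_half_pow key
    exact eq_of_dist_eq_zero (le_antisymm this dist_nonneg)
  have hsurj : h '' Kf = Kg := by
    apply Set.Subset.antisymm
    · rintro _ ⟨z, hz, rfl⟩; exact (hh z hz).1
    · intro w hw
      obtain ⟨z, hzKf, hz⟩ := shadow_exists hf hθ hKfne hKf hEf hfpre
        (u := fun k => g^[k] w) (fun k => hinfKf _ (hgiter w hw k))
        (fun k => by
          show dist (f (g^[k] w)) (g^[k+1] w) ≤ θ/3
          rw [Function.iterate_succ_apply']; exact hfg _)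
      refine ⟨z, hzKf, ?_⟩
      refine huniq z hzKf (h z) w ?_ ?_
      · intro k; exact ((hh z hzKf).2 k).trans (by linarith)
      · intro k; rw [dist_comm]; exact (hz k).trans (by linarith)
  exact ⟨h, ⟨hcont, hmapsTo, hconj, hdist12⟩, huniq_clause, hinj, hsurj,
    fun x hx y hy => hHolder x hx y hy⟩
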